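/- Let L ∈ ℤ[x_1^{±1},...,x_n^{±1}] be a Laurent polynomial and let f, g ∈ ℤ[x_1,...,x_n] be polynomials with f·L = g in the Laurent polynomial ring. If f(e_i) ≠ 0 for every i (where e_i has i-th coordinate 0 and all other coordinates 1), then L is a polynomial, i.e. lies in the image of ℤ[x_1,...,x_n] in the Laurent polynomial ring. -/

import Mathlib

/-- The Laurent polynomial ring `ℤ[x₁^{±1},...,xₙ^{±1}]` in `n` variables. -/
abbrev MvLaurent (n : ℕ) : Type := AddMonoidAlgebra ℤ (Fin n →₀ ℤ)

/-- The canonical inclusion of the polynomial ring into the Laurent polynomial ring. -/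
noncomputable def toLaurent (n : ℕ) : MvPolynomial (Fin n) ℤ →+* MvLaurent n :=
  AddMonoidAlgebra.mapDomainRingHom ℤ
    (Finsupp.mapRange.addMonoidHom (Nat.castAddMonoidHom ℤ))

/-- The point `e i = (1,...,1,0,1,...,1)` with `0` in the `i`-th position. -/
def evalPoint (n : ℕ) (i : Fin n) : Fin n → ℤ := fun j => if j = i then 0 else 1

namespace Stmt8Aux

/-- The map on exponents. -/
noncomputable def F (n : ℕ) : (Fin n →₀ ℕ) → (Fin n →₀ ℤ) :=
  fun b => Finsupp.mapRange Nat.cast Nat.cast_zero b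

lemma F_add {n : ℕ} (a b : Fin n →₀ ℕ) : F n (a + b) = F n a + F n b := by
  ext j; simp [F]

lemma toLaurent_apply {n : ℕ} (p : MvPolynomial (Fin n) ℤ) :
    toLaurent n p = AddMonoidAlgebra.mapDomain (F n) p := rfl

lemma toLaurent_injective (n : ℕ) : Function.Injective (toLaurent n) :=
  AddMonoidAlgebra.mapDomain_injective (Finsupp.mapRange_injective _ Nat.cast_zero Nat.cast_injective)

lemma toLaurent_monomial {n : ℕ} (b : Fin n →₀ ℕ) (c : ℤ) :
    toLaurent n (MvPolynomial.monomial b c) = AddMonoidAlgebra.single (F n b) c := by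
  show AddMonoidAlgebra.mapDomain (F n) (MvPolynomial.monomial b c) = _
  rw [← MvPolynomial.single_eq_monomial]
  exact AddMonoidAlgebra.mapDomain_single

lemma prime_X {n : ℕ} (i : Fin n) : Prime (MvPolynomial.X i : MvPolynomial (Fin n) ℤ) := by
  obtain ⟨m, rfl⟩ : ∃ m, n = m + 1 := ⟨n - 1, (Nat.succ_pred_eq_of_pos i.pos).symm⟩
  have h0 : Prime (MvPolynomial.X 0 : MvPolynomial (Fin (m+1)) ℤ) := by
    rw [← MulEquiv.prime_iff (MvPolynomial.finSuccEquiv ℤ m).toMulEquiv]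
    have : (MvPolynomial.finSuccEquiv ℤ m).toMulEquiv (MvPolynomial.X 0) = Polynomial.X :=
      MvPolynomial.finSuccEquiv_X_zero
    rw [this]
    exact Polynomial.prime_X
  rw [← MulEquiv.prime_iff (MvPolynomial.renameEquiv ℤ (Equiv.swap (0:Fin (m+1)) i)).toMulEquiv] at h0
  have : (MvPolynomial.renameEquiv ℤ (Equiv.swap (0:Fin (m+1)) i)).toMulEquiv (MvPolynomial.X 0)
      = MvPolynomial.X i := by
    show MvPolynomial.rename _ (MvPolynomial.X 0) = _
    rw [MvPolynomial.rename_X, Equiv.swap_apply_left]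
  rwa [this] at h0

/-- Every Laurent polynomial becomes a polynomial after multiplication by a monomial. -/
lemma exists_shift {n : ℕ} (L : MvLaurent n) :
    ∃ (a : Fin n →₀ ℕ) (h : MvPolynomial (Fin n) ℤ),
      toLaurent n h = AddMonoidAlgebra.single (F n a) 1 * L := by
  induction L using AddMonoidAlgebra.induction with
  | zero => exact ⟨0, 0, by simp⟩
  | single_add d c L' hd hc ih =>
    obtain ⟨a', h', ih⟩ := ih
    set b : Fin n →₀ ℕ := d.mapRange (fun z => (-z).toNat) (by simp) with hb
    set e : Fin n →₀ ℕ := (F n b + d).mapRange Int.toNat Int.toNat_zero with he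
    have hFe : F n e = F n b + d := by
      ext j
      have : (F n b) j = ((-(d j)).toNat : ℤ) := by simp [F, hb]
      simp only [F, he, Finsupp.mapRange_apply, Finsupp.coe_add, Pi.add_apply] at this ⊢
      omega
    refine ⟨b + a', MvPolynomial.monomial a' 1 * MvPolynomial.monomial e c
      + MvPolynomial.monomial b 1 * h', ?_⟩
    have h1 : AddMonoidAlgebra.single (F n a') (1:ℤ) * AddMonoidAlgebra.single (F n e) c
        = AddMonoidAlgebra.single (F n b + F n a') 1 * AddMonoidAlgebra.single d c := by
      rw [AddMonoidAlgebra.single_mul_single, AddMonoidAlgebra.single_mul_single, hFe]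
      congr 1
      abel
    rw [map_add, map_mul, map_mul, toLaurent_monomial, toLaurent_monomial, toLaurent_monomial,
      ih, F_add, mul_add, h1]
    congr 1
    rw [← mul_assoc, AddMonoidAlgebra.single_mul_single, one_mul]

/-- Key divisibility lemma in the polynomial ring. -/
lemma div_lemma {n : ℕ} (f : MvPolynomial (Fin n) ℤ)
    (hfX : ∀ i : Fin n, ¬ (MvPolynomial.X i : MvPolynomial (Fin n) ℤ) ∣ f) :
    ∀ (N : ℕ) (a : Fin n →₀ ℕ), a.sum (fun _ k => k) = N →
      ∀ h g : MvPolynomial (Fin n) ℤ, f * h = MvPolynomial.monomial a 1 * g →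
      ∃ Q, h = MvPolynomial.monomial a 1 * Q := by
  intro N
  induction N using Nat.strong_induction_on with
  | _ N IH =>
    intro a ha h g heq
    by_cases ha0 : a = 0
    · exact ⟨h, by simp [ha0, MvPolynomial.monomial_zero']⟩
    · obtain ⟨i, hi⟩ : ∃ i, a i ≠ 0 := by
        by_contra hc
        push_neg at hc
        exact ha0 (Finsupp.ext fun j => hc j)
      set a' : Fin n →₀ ℕ := a - Finsupp.single i 1 with ha'
      have haa : a = Finsupp.single i 1 + a' := by
        ext j
        simp only [ha', Finsupp.coe_add, Pi.add_apply, Finsupp.coe_tsub, Pi.sub_apply]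
        rcases eq_or_ne j i with rfl | hji
        · simp; omega
        · simp [Finsupp.single_apply, Ne.symm hji, hji]
      have hmon : (MvPolynomial.monomial a (1:ℤ))
          = MvPolynomial.X i * MvPolynomial.monomial a' 1 := by
        rw [MvPolynomial.X, MvPolynomial.monomial_mul, one_mul, ← haa]
      have hdvd : (MvPolynomial.X i : MvPolynomial (Fin n) ℤ) ∣ f * h := by
        rw [heq, hmon, mul_assoc]
        exact dvd_mul_right _ _
      rcases (prime_X i).2.2 _ _ hdvd with hcase | hcase
      · exact absurd hcase (hfX i)
      obtain ⟨h1, rfl⟩ := hcase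
      have heq' : f * h1 = MvPolynomial.monomial a' 1 * g := by
        have hx : (MvPolynomial.X i : MvPolynomial (Fin n) ℤ) ≠ 0 := MvPolynomial.X_ne_zero i
        apply mul_left_cancel₀ hx
        calc MvPolynomial.X i * (f * h1) = f * (MvPolynomial.X i * h1) := by ring
          _ = MvPolynomial.monomial a 1 * g := heq
          _ = MvPolynomial.X i * (MvPolynomial.monomial a' 1 * g) := by rw [hmon]; ring
      have hlt : a'.sum (fun _ k => k) < N := by
        have : a.sum (fun _ k => k) = (Finsupp.single i 1).sum (fun _ k => k)
            + a'.sum (fun _ k => k) := by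
          rw [haa]
          exact Finsupp.sum_add_index' (fun _ => rfl) (fun _ _ _ => rfl)
        rw [Finsupp.sum_single_index rfl] at this
        omega
      obtain ⟨Q, hQ⟩ := IH _ hlt a' rfl h1 g heq'
      exact ⟨Q, by rw [hQ, hmon]; ring⟩

end Stmt8Aux

theorem stmt8 {n : ℕ} (L : MvLaurent n) (f g : MvPolynomial (Fin n) ℤ)
    (hfg : toLaurent n f * L = toLaurent n g)
    (hf : ∀ i : Fin n, MvPolynomial.eval (evalPoint n i) f ≠ 0) :
    ∃ Q : MvPolynomial (Fin n) ℤ, toLaurent n Q = L := by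
  open Stmt8Aux in
  -- X i does not divide f
  have hfX : ∀ i : Fin n, ¬ (MvPolynomial.X i : MvPolynomial (Fin n) ℤ) ∣ f := by
    intro i ⟨q, hq⟩
    apply hf i
    rw [hq, map_mul, MvPolynomial.eval_X]
    have : evalPoint n i i = 0 := by simp [evalPoint]
    rw [this, zero_mul]
  obtain ⟨a, h, hshift⟩ := Stmt8Aux.exists_shift L
  -- pass the equation to the polynomial ring
  have hpoly : f * h = MvPolynomial.monomial a 1 * g := by
    apply Stmt8Aux.toLaurent_injective n
    rw [map_mul, map_mul, Stmt8Aux.toLaurent_monomial, hshift, ← mul_assoc,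
      mul_comm (toLaurent n f), mul_assoc, hfg]
  obtain ⟨Q, hQ⟩ := Stmt8Aux.div_lemma f hfX _ a rfl h g hpoly
  refine ⟨Q, ?_⟩
  have hcube : toLaurent n h
      = AddMonoidAlgebra.single (Stmt8Aux.F n a) 1 * toLaurent n Q := by
    rw [hQ, map_mul, Stmt8Aux.toLaurent_monomial]
  rw [hcube] at hshift
  have hcancel := congrArg (fun z => AddMonoidAlgebra.single (-(Stmt8Aux.F n a)) (1:ℤ) * z) hshift
  simp only [← mul_assoc, AddMonoidAlgebra.single_mul_single, neg_add_cancel, one_mul] at hcancel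
  rw [← AddMonoidAlgebra.one_def, one_mul, one_mul] at hcancel
  exact hcancel
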